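/- Let p : E → B be a fiber bundle with compact fiber F that admits a trivialization over B \ C, where C is a closed subset of B, and let f : E → K be a continuous map to a topological space K such that f is constant on the fiber p⁻¹(c) for each c ∈ C. Then there exist continuous maps p' : E → (B×F)/(C×F) and g : (B×F)/(C×F) → K such that π_B ∘ p' = p, f = g ∘ p', and p' restricts to an isomorphism of bundles over B \ C (in particular, p' maps p⁻¹(B \ C) homeomorphically onto π_B⁻¹(B \ C) commuting with the projections to B \ C). -/

import Mathlib

noncomputable section

open Metric unitInterval
set_option linter.unusedTactic false
set_option linter.unreachableTactic false
set_option linter.unnecessarySimpa false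

/-- The setoid on `K × F` collapsing each slice `{x} × F` with `x ∈ L` to a point. -/
def collapseSetoid (K F : Type*) (L : Set K) : Setoid (K × F) where
  r a b := a = b ∨ (a.1 = b.1 ∧ a.1 ∈ L)
  iseqv := by
    constructor
    · intro a; left; rfl
    · rintro a b (h | h)
      · left; exact h.symm
      · right; exact ⟨h.1.symm, h.1 ▸ h.2⟩
    · rintro a b c (h1 | h1) (h2 | h2)
      · left; exact h1.trans h2
      · right; exact ⟨by rw [h1]; exact h2.1, by rw [h1]; exact h2.2⟩
      · right; exact ⟨by rw [← h2]; exact h1.1, h1.2⟩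
      · right; exact ⟨h1.1.trans h2.1, h1.2⟩

/-- The quotient `(K × F)/(L × F)` of `K × F` in which each set `{x} × F`, `x ∈ L`,
is collapsed to a point and all other points are left alone. -/
def Collapse (K : Type*) [TopologicalSpace K] (F : Type*) [TopologicalSpace F]
    (L : Set K) : Type _ :=
  Quotient (collapseSetoid K F L)

instance (K : Type*) [TopologicalSpace K] (F : Type*) [TopologicalSpace F] (L : Set K) :
    TopologicalSpace (Collapse K F L) :=
  inferInstanceAs (TopologicalSpace (Quotient (collapseSetoid K F L)))

/-- The natural projection `π_K : (K × F)/(L × F) → K`. -/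
def collapseProj {K : Type*} [TopologicalSpace K] {F : Type*} [TopologicalSpace F]
    {L : Set K} : C(Collapse K F L, K) where
  toFun := Quotient.lift (fun a => a.1) (by
    rintro a b (h | h)
    · rw [h]
    · exact h.1)
  continuous_toFun := (continuous_fst).quotient_lift _

/-- The quotient map `K × F → (K × F)/(L × F)`. -/
def collapseMk {K : Type*} [TopologicalSpace K] {F : Type*} [TopologicalSpace F]
    (L : Set K) : C(K × F, Collapse K F L) where
  toFun := Quotient.mk (collapseSetoid K F L)
  continuous_toFun := continuous_quotient_mk'

/-- The map `(K × F)/(L × F) → (K × F')/(L × F')` induced by `g : F → F'` in the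
second coordinate. -/
def collapseMapF {K : Type*} [TopologicalSpace K] {F F' : Type*} [TopologicalSpace F]
    [TopologicalSpace F'] (L : Set K) (g : C(F, F')) :
    C(Collapse K F L, Collapse K F' L) where
  toFun := Quotient.map' (fun a => (a.1, g a.2))
    (by
      rintro a b (h | h)
      · left; rw [h]
      · right; exact ⟨h.1, h.2⟩)
  continuous_toFun := (continuous_fst.prodMk (g.continuous.comp continuous_snd)).quotient_map' _


set_option linter.unusedSectionVars false

noncomputable section StmtAux
open Set

variable {E B F : Type*} [TopologicalSpace E] [TopologicalSpace B] [TopologicalSpace F]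

open Classical in
/-- Auxiliary second coordinate for the induced map `E → (B×F)/(C×F)`. -/
def stmtSigma (p : C(E, B)) (Cs : Set B)
    (h : ((Csᶜ : Set B) × F) ≃ₜ ((p : E → B) ⁻¹' Csᶜ : Set E))
    (tr : B → Bundle.Trivialization F (p : E → B)) (e : E) : F :=
  if he : p e ∈ Cs then ((tr (p e)) e).2 else (h.symm ⟨e, he⟩).2

/-- The induced map `E → (B×F)/(C×F)`. -/
def stmtP (p : C(E, B)) (Cs : Set B)
    (h : ((Csᶜ : Set B) × F) ≃ₜ ((p : E → B) ⁻¹' Csᶜ : Set E))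
    (tr : B → Bundle.Trivialization F (p : E → B)) (e : E) : Collapse B F Cs :=
  Quotient.mk (collapseSetoid B F Cs) (p e, stmtSigma p Cs h tr e)

variable {p : C(E, B)} {Cs : Set B}
  {h : ((Csᶜ : Set B) × F) ≃ₜ ((p : E → B) ⁻¹' Csᶜ : Set E)}
  {tr : B → Bundle.Trivialization F (p : E → B)}

theorem stmtP_proj (e : E) : collapseProj (stmtP p Cs h tr e) = p e := rfl

theorem stmtP_mem (e : E) (he : p e ∈ Cs) (y : F) :
    stmtP p Cs h tr e = Quotient.mk (collapseSetoid B F Cs) (p e, y) :=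
  Quotient.sound (Or.inr ⟨rfl, he⟩)

theorem symm_fst (hph : ∀ z : ((Csᶜ : Set B) × F), p ((h z : E)) = (z.1 : B))
    (x : ((p : E → B) ⁻¹' Csᶜ : Set E)) : ((h.symm x).1 : B) = p (x : E) := by
  have := hph (h.symm x)
  rw [h.apply_symm_apply] at this; exact this.symm

theorem stmtP_not_mem (e : E) (he : p e ∉ Cs) :
    stmtP p Cs h tr e
      = Quotient.mk (collapseSetoid B F Cs) (p e, (h.symm ⟨e, he⟩).2) := by
  unfold stmtP stmtSigma
  rw [dif_neg he]

theorem stmtP_h (hph : ∀ z : ((Csᶜ : Set B) × F), p ((h z : E)) = (z.1 : B))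
    (z : ((Csᶜ : Set B) × F)) :
    stmtP p Cs h tr (h z : E)
      = Quotient.mk (collapseSetoid B F Cs) ((z.1 : B), z.2) := by
  have he : p ((h z : E)) ∉ Cs := by rw [hph z]; exact z.1.2
  rw [stmtP_not_mem _ he]
  have hx : (⟨(h z : E), he⟩ : ((p : E → B) ⁻¹' Csᶜ : Set E)) = h z := rfl
  rw [hx, h.symm_apply_apply, hph z]

variable [CompactSpace F]

theorem stmtP_surj (hp : Function.Surjective p)
    (hph : ∀ z : ((Csᶜ : Set B) × F), p ((h z : E)) = (z.1 : B)) :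
    Function.Surjective (stmtP p Cs h tr) := by
  intro q
  obtain ⟨⟨b, y⟩, rfl⟩ := Quotient.exists_rep q
  by_cases hb : b ∈ Cs
  · obtain ⟨e, he⟩ := hp b
    refine ⟨e, ?_⟩
    rw [stmtP_mem e (by rw [he]; exact hb) y, he]
  · exact ⟨h (⟨b, hb⟩, y), stmtP_h hph _⟩

theorem stmtP_cont (hCs : IsClosed Cs)
    (hph : ∀ z : ((Csᶜ : Set B) × F), p ((h z : E)) = (z.1 : B)) :
    Continuous (stmtP p Cs h tr) := by
  rw [continuous_def]
  intro U hU
  have hV : IsOpen ((Quotient.mk (collapseSetoid B F Cs)) ⁻¹' U) :=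
    hU.preimage continuous_quotient_mk'
  rw [isOpen_iff_forall_mem_open]
  intro e heU
  by_cases he : p e ∈ Cs
  · have hsub : {p e} ×ˢ (univ : Set F) ⊆ (Quotient.mk (collapseSetoid B F Cs)) ⁻¹' U := by
      rintro ⟨b', y⟩ ⟨hb', -⟩
      simp only [mem_singleton_iff] at hb'
      subst hb'
      show Quotient.mk (collapseSetoid B F Cs) (p e, y) ∈ U
      rw [← stmtP_mem (h := h) (tr := tr) e he y]; exact heU
    obtain ⟨W, V', hW, -, hpeW, hVuniv, hWV⟩ :=
      generalized_tube_lemma isCompact_singleton isCompact_univ hV hsub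
    refine ⟨(p : E → B) ⁻¹' W, ?_, hW.preimage p.continuous, hpeW rfl⟩
    intro e' he'
    show stmtP p Cs h tr e' ∈ U
    exact hWV (Set.mem_prod.mpr ⟨he', hVuniv (mem_univ _)⟩)
  · have hO : IsOpen ((p : E → B) ⁻¹' Csᶜ) := hCs.isOpen_compl.preimage p.continuous
    set Φ : ((p : E → B) ⁻¹' Csᶜ : Set E) → Collapse B F Cs :=
      fun x => Quotient.mk (collapseSetoid B F Cs) (((h.symm x).1 : B), (h.symm x).2) with hΦ
    have hΦc : Continuous Φ := by
      apply continuous_quotient_mk'.comp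
      exact (continuous_subtype_val.comp (continuous_fst.comp h.symm.continuous)).prodMk
        (continuous_snd.comp h.symm.continuous)
    have hΦeq : ∀ x : ((p : E → B) ⁻¹' Csᶜ : Set E), Φ x = stmtP p Cs h tr (x : E) := by
      intro x
      rw [stmtP_not_mem (x : E) x.2]
      simp only [hΦ, Subtype.coe_eta]
      rw [symm_fst hph x]
    refine ⟨Subtype.val '' (Φ ⁻¹' U), ?_, hO.isOpenMap_subtype_val _ (hU.preimage hΦc), ?_⟩
    · rintro _ ⟨x, hx, rfl⟩
      show stmtP p Cs h tr (x : E) ∈ U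
      rw [← hΦeq x]; exact hx
    · exact ⟨⟨e, he⟩, by rw [Set.mem_preimage, hΦeq]; exact heU, rfl⟩

theorem stmtP_quot (hp : Function.Surjective p)
    (hph : ∀ z : ((Csᶜ : Set B) × F), p ((h z : E)) = (z.1 : B))
    (hbase : ∀ b, b ∈ (tr b).baseSet) (hCs : IsClosed Cs)
    (U : Set (Collapse B F Cs)) (hA : IsOpen (stmtP p Cs h tr ⁻¹' U)) : IsOpen U := by
  apply (isQuotientMap_quotient_mk' (s := collapseSetoid B F Cs)).isOpen_preimage.mp
  show IsOpen (Quotient.mk (collapseSetoid B F Cs) ⁻¹' U)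
  rw [isOpen_iff_forall_mem_open]
  rintro ⟨b, y⟩ hby
  by_cases hb : b ∈ Cs
  · set t := tr b with ht
    have hO2 : IsOpen (t.target ∩
        t.toOpenPartialHomeomorph.symm ⁻¹' (stmtP p Cs h tr ⁻¹' U)) :=
      t.toOpenPartialHomeomorph.isOpen_inter_preimage_symm hA
    have hfib : ∀ e' : E, p e' = b → e' ∈ stmtP p Cs h tr ⁻¹' U := by
      intro e' hpe'
      show stmtP p Cs h tr e' ∈ U
      rw [stmtP_mem e' (by rw [hpe']; exact hb) y, hpe']
      exact hby
    have hsub : {b} ×ˢ (univ : Set F) ⊆ t.target ∩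
        t.toOpenPartialHomeomorph.symm ⁻¹' (stmtP p Cs h tr ⁻¹' U) := by
      rintro ⟨b', y'⟩ ⟨hb', -⟩
      simp only [mem_singleton_iff] at hb'
      have htar : (b', y') ∈ t.target := t.mem_target.2 (by rw [hb']; exact hbase b)
      exact ⟨htar, hfib _ ((t.proj_symm_apply htar).trans hb')⟩
    obtain ⟨W, V', hW, -, hbW, hVuniv, hWV⟩ :=
      generalized_tube_lemma isCompact_singleton isCompact_univ hO2 hsub
    have hpW : ∀ e' : E, p e' ∈ W → e' ∈ stmtP p Cs h tr ⁻¹' U := by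
      intro e' hWe'
      have htar : (p e', y) ∈ t.target :=
        (hWV (Set.mem_prod.mpr ⟨hWe', hVuniv (mem_univ _)⟩)).1
      have hsrc : e' ∈ t.source := t.mem_source.2 (t.mem_target.1 htar)
      have hfst : (t e').1 = p e' := t.coe_fst hsrc
      have hmem2 : t e' ∈ t.target ∩
          t.toOpenPartialHomeomorph.symm ⁻¹' (stmtP p Cs h tr ⁻¹' U) :=
        hWV (Set.mem_prod.mpr ⟨by rw [hfst]; exact hWe', hVuniv (mem_univ _)⟩)
      have h3 : t.toOpenPartialHomeomorph.symm (t e') = e' := t.toOpenPartialHomeomorph.left_inv hsrc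
      have := hmem2.2
      rwa [Set.mem_preimage, h3] at this
    refine ⟨W ×ˢ (univ : Set F), ?_, hW.prod isOpen_univ,
      Set.mem_prod.mpr ⟨hbW rfl, mem_univ _⟩⟩
    rintro ⟨b', y'⟩ hmem'
    have hb'W : b' ∈ W := (Set.mem_prod.mp hmem').1
    show Quotient.mk (collapseSetoid B F Cs) (b', y') ∈ U
    by_cases hb'' : b' ∈ Cs
    · obtain ⟨e'', he''⟩ := hp b'
      have hA'' : stmtP p Cs h tr e'' ∈ U := hpW e'' (by rw [he'']; exact hb'W)
      rw [stmtP_mem e'' (by rw [he'']; exact hb'') y', he''] at hA''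
      exact hA''
    · have hA'' : stmtP p Cs h tr (h (⟨b', hb''⟩, y') : E) ∈ U :=
        hpW _ (by rw [hph]; exact hb'W)
      rw [stmtP_h hph (⟨b', hb''⟩, y')] at hA''
      exact hA''
  · set Θ : ((Csᶜ : Set B) × F) → E := fun z => (h z : E) with hΘ
    have hΘc : Continuous Θ := continuous_subtype_val.comp h.continuous
    set ι : ((Csᶜ : Set B) × F) → B × F := fun z => ((z.1 : B), z.2) with hι
    have hιopen : IsOpenMap ι :=
      (hCs.isOpen_compl.isOpenMap_subtype_val).prodMap IsOpenMap.id
    refine ⟨ι '' (Θ ⁻¹' (stmtP p Cs h tr ⁻¹' U)), ?_,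
      hιopen _ (hA.preimage hΘc), ⟨(⟨b, hb⟩, y), ?_, rfl⟩⟩
    · rintro _ ⟨z, hz, rfl⟩
      show Quotient.mk (collapseSetoid B F Cs) ((z.1 : B), z.2) ∈ U
      rw [← stmtP_h (tr := tr) hph z]
      exact hz
    · show stmtP p Cs h tr (h (⟨b, hb⟩, y) : E) ∈ U
      rw [stmtP_h hph (⟨b, hb⟩, y)]
      exact hby

end StmtAux

/-- Let `p : E → B` be a fiber bundle with compact fiber `F` admitting a
trivialization over `B \ C`, `C` closed in `B`, and let `f : E → K` be continuous and
constant on the fiber `p⁻¹(c)` for each `c ∈ C`. Then there are continuous maps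
`p' : E → (B×F)/(C×F)` and `g : (B×F)/(C×F) → K` with `π_B ∘ p' = p`, `f = g ∘ p'`, and
`p'` restricting to an isomorphism of bundles over `B \ C` (in particular, mapping
`p⁻¹(B \ C)` homeomorphically onto `π_B⁻¹(B \ C)`, commuting with the projections). -/
theorem stmt17 {E B F K : Type*} [TopologicalSpace E] [TopologicalSpace B]
    [TopologicalSpace F] [TopologicalSpace K] [CompactSpace F]
    (p : C(E, B)) (hp : Function.Surjective p)
    (hbundle : ∀ b : B, ∃ e : Bundle.Trivialization F (p : E → B), b ∈ e.baseSet)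
    (Cs : Set B) (hCs : IsClosed Cs)
    (htriv : ∃ h : ((Csᶜ : Set B) × F) ≃ₜ ((p : E → B) ⁻¹' Csᶜ : Set E),
      ∀ z : (Csᶜ : Set B) × F, p ((h z : E)) = (z.1 : B))
    (f : C(E, K))
    (hf : ∀ c ∈ Cs, ∀ e₁ e₂ : E, p e₁ = c → p e₂ = c → f e₁ = f e₂) :
    ∃ (p' : C(E, Collapse B F Cs)) (g : C(Collapse B F Cs, K)),
      (∀ e : E, collapseProj (p' e) = p e) ∧
      (∀ e : E, g (p' e) = f e) ∧
      ∃ ψ : ((p : E → B) ⁻¹' Csᶜ : Set E) ≃ₜ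
          ((collapseProj (K := B) (F := F) (L := Cs) : Collapse B F Cs → B) ⁻¹' Csᶜ :
            Set (Collapse B F Cs)),
        ∀ e : ((p : E → B) ⁻¹' Csᶜ : Set E), (ψ e : Collapse B F Cs) = p' (e : E) := by
  classical
  obtain ⟨h, hph⟩ := htriv
  set tr : B → Bundle.Trivialization F (p : E → B) := fun b => (hbundle b).choose with htr
  have hbase : ∀ b, b ∈ (tr b).baseSet := fun b => (hbundle b).choose_spec
  set P : E → Collapse B F Cs := stmtP p Cs h tr with hPdef
  have hPc : Continuous P := stmtP_cont hCs hph
  have hsurj : Function.Surjective P := stmtP_surj hp hph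
  have hquot : ∀ U : Set (Collapse B F Cs), IsOpen (P ⁻¹' U) → IsOpen U :=
    fun U hU => stmtP_quot hp hph hbase hCs U hU
  -- f is constant on the fibers of P
  have hconst : ∀ e₁ e₂ : E, P e₁ = P e₂ → f e₁ = f e₂ := by
    intro e₁ e₂ hq
    rcases Quotient.exact hq with heq | ⟨hfst, hmem⟩
    · have h1 : p e₁ = p e₂ := congrArg Prod.fst heq
      by_cases hc : p e₁ ∈ Cs
      · exact hf (p e₁) hc e₁ e₂ rfl h1.symm
      · have hc2 : p e₂ ∉ Cs := by rw [← h1]; exact hc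
        have h2 : stmtSigma p Cs h tr e₁ = stmtSigma p Cs h tr e₂ :=
          congrArg Prod.snd heq
        unfold stmtSigma at h2
        rw [dif_neg hc, dif_neg hc2] at h2
        have hx : h.symm ⟨e₁, hc⟩ = h.symm ⟨e₂, hc2⟩ := by
          refine Prod.ext (Subtype.ext ?_) h2
          rw [symm_fst hph, symm_fst hph]
          exact h1
        have hxx := congrArg h hx
        rw [h.apply_symm_apply, h.apply_symm_apply] at hxx
        have : e₁ = e₂ := congrArg Subtype.val hxx
        rw [this]
    · exact hf (p e₁) hmem e₁ e₂ rfl hfst.symm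
  -- the induced map g
  set gfun : Collapse B F Cs → K := fun q => f (Function.surjInv hsurj q) with hg
  have hgP : ∀ e : E, gfun (P e) = f e :=
    fun e => hconst _ _ (Function.surjInv_eq hsurj (P e))
  have hgc : Continuous gfun := by
    rw [continuous_def]
    intro V hV
    apply hquot
    have hpre : P ⁻¹' (gfun ⁻¹' V) = f ⁻¹' V := by
      ext e
      simp only [Set.mem_preimage, hgP e]
    rw [hpre]
    exact hV.preimage f.continuous
  -- the homeomorphism over the complement of Cs
  set ι : ((Csᶜ : Set B) × F) → B × F := fun z => ((z.1 : B), z.2) with hι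
  have hιc : Continuous ι :=
    (continuous_subtype_val.comp continuous_fst).prodMk continuous_snd
  have hιopen : IsOpenMap ι :=
    (hCs.isOpen_compl.isOpenMap_subtype_val).prodMap IsOpenMap.id
  set μ : ((Csᶜ : Set B) × F) →
      ((collapseProj (K := B) (F := F) (L := Cs) : Collapse B F Cs → B) ⁻¹' Csᶜ :
        Set (Collapse B F Cs)) :=
    fun z => ⟨Quotient.mk (collapseSetoid B F Cs) (ι z), z.1.2⟩ with hμ
  have hμc : Continuous μ :=
    Continuous.subtype_mk (continuous_quotient_mk'.comp hιc) _
  have hμbij : Function.Bijective μ := by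
    constructor
    · intro z w hzw
      have hval : Quotient.mk (collapseSetoid B F Cs) (ι z)
          = Quotient.mk (collapseSetoid B F Cs) (ι w) := congrArg Subtype.val hzw
      rcases Quotient.exact hval with heq | ⟨-, hmem⟩
      · have heq' : (((z.1 : Set.Elem Csᶜ) : B), z.2) = (((w.1 : Set.Elem Csᶜ) : B), w.2) := heq
        have h1 : z.1 = w.1 := Subtype.ext (congrArg Prod.fst heq')
        have h2 := congrArg Prod.snd heq'
        exact Prod.ext h1 h2
      · exact absurd hmem z.1.2
    · rintro ⟨q, hq⟩
      obtain ⟨⟨b, y⟩, hrep⟩ := Quotient.exists_rep q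
      have hbC : b ∈ Csᶜ := by
        rw [Set.mem_preimage, ← hrep] at hq
        exact hq
      exact ⟨(⟨b, hbC⟩, y), Subtype.ext hrep⟩
  have hμopen : IsOpenMap μ := by
    intro O hO
    have key : μ '' O = Subtype.val ⁻¹'
        (Quotient.mk (collapseSetoid B F Cs) '' (ι '' O)) := by
      ext q
      constructor
      · rintro ⟨z, hz, rfl⟩
        exact ⟨ι z, ⟨z, hz, rfl⟩, rfl⟩
      · rintro ⟨a, ⟨z, hz, rfl⟩, hq⟩
        exact ⟨z, hz, Subtype.ext hq⟩
    rw [key]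
    refine (continuous_subtype_val (p := fun x : Collapse B F Cs =>
      x ∈ ((collapseProj (K := B) (F := F) (L := Cs) : Collapse B F Cs → B) ⁻¹' Csᶜ))).isOpen_preimage _ ?_
    apply (isQuotientMap_quotient_mk' (s := collapseSetoid B F Cs)).isOpen_preimage.mp
    show IsOpen (Quotient.mk (collapseSetoid B F Cs) ⁻¹'
      (Quotient.mk (collapseSetoid B F Cs) '' (ι '' O)))
    have hsat : Quotient.mk (collapseSetoid B F Cs) ⁻¹'
        (Quotient.mk (collapseSetoid B F Cs) '' (ι '' O)) = ι '' O := by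
      ext a
      constructor
      · rintro ⟨a', ⟨z, hz, rfl⟩, ha'⟩
        rcases Quotient.exact ha' with heq | ⟨hfst, hmem⟩
        · exact heq ▸ ⟨z, hz, rfl⟩
        · exact absurd hmem z.1.2
      · intro ha
        exact Set.mem_image_of_mem _ ha
    rw [hsat]
    exact hιopen _ hO
  set μh := Equiv.toHomeomorphOfContinuousOpen
    (Equiv.ofBijective μ hμbij) hμc hμopen with hμh
  refine ⟨⟨P, hPc⟩, ⟨gfun, hgc⟩, fun e => rfl, fun e => hgP e, h.symm.trans μh, ?_⟩
  intro e
  show (μ (h.symm e) : Collapse B F Cs) = P (e : E)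
  rw [hPdef]
  rw [stmtP_not_mem (e : E) e.2]
  show Quotient.mk (collapseSetoid B F Cs) (((h.symm e).1 : B), (h.symm e).2) = _
  simp only [Subtype.coe_eta]
  rw [symm_fst hph e]
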